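/- For all positive integers a and n with n > a, one has f(n-1, a) = f(n, a). -/

import Mathlib

/-- A family of sets is union-closed if it contains the union of any two of its sets. -/
def UnionClosed (F : Finset (Finset ℕ)) : Prop :=
  ∀ S ∈ F, ∀ T ∈ F, S ∪ T ∈ F

/-- `F` is a family of subsets of `[n] = {0, …, n-1}` (modeled as `Finset.range n`). -/
def FamilyOn (n : ℕ) (F : Finset (Finset ℕ)) : Prop :=
  ∀ S ∈ F, S ⊆ Finset.range n

/-- The degree of an element `e`: the number of sets of `F` containing `e`. -/
def degOf (F : Finset (Finset ℕ)) (e : ℕ) : ℕ :=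
  (F.filter (fun S => e ∈ S)).card

/-- `franklF n a` is the maximum cardinality of a nonempty union-closed family of subsets
of `[n]` in which every element of `[n]` belongs to at most `a` sets. -/
noncomputable def franklF (n a : ℕ) : ℕ :=
  sSup {m | ∃ F : Finset (Finset ℕ), UnionClosed F ∧ FamilyOn n F ∧ F.Nonempty ∧
    (∀ e ∈ Finset.range n, degOf F e ≤ a) ∧ F.card = m}

/-- `franklG n m` is the minimum, over union-closed families of subsets of `[n]` with
exactly `m` sets, of the maximum degree `max_{e ∈ [n]} |{S ∈ F : e ∈ S}|`. -/
noncomputable def franklG (n m : ℕ) : ℕ :=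
  sInf {a | ∃ F : Finset (Finset ℕ), UnionClosed F ∧ FamilyOn n F ∧ F.card = m ∧
    (Finset.range n).sup (degOf F) = a}

/-- The union (sup) of a nonempty subfamily of a union-closed family belongs to it. -/
lemma sup_mem_of_unionClosed {F : Finset (Finset ℕ)} (hUC : UnionClosed F) :
    ∀ G : Finset (Finset ℕ), G ⊆ F → G.Nonempty → G.sup id ∈ F := by
  intro G
  induction G using Finset.induction_on with
  | empty => intro _ h; simp at h
  | @insert a s hna ih =>
    intro hsub _
    rcases s.eq_empty_or_nonempty with rfl | hs
    · simpa using hsub (Finset.mem_insert_self a ∅)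
    · have h1 : a ∈ F := hsub (Finset.mem_insert_self a s)
      have h2 : s.sup id ∈ F := ih (fun x hx => hsub (Finset.mem_insert_of_mem hx)) hs
      have h3 := hUC a h1 (s.sup id) h2
      simpa [Finset.sup_insert, Finset.sup_eq_union] using h3

/-- If every element of `[n]` has a "critical pair" `(S, S ∪ {e})` in `F`, then some
element has degree at least `n`, contradicting `deg ≤ a < n`. -/
lemma all_critical_false {n a : ℕ} (han : a < n) {F : Finset (Finset ℕ)}
    (hUC : UnionClosed F)
    (hdeg : ∀ e ∈ Finset.range n, degOf F e ≤ a)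
    (hcrit : ∀ e ∈ Finset.range n, ∃ S ∈ F, e ∉ S ∧ insert e S ∈ F) : False := by
  classical
  set V : ℕ → Finset ℕ := fun e => (F.filter (fun S => e ∉ S)).sup id with hVdef
  have hVF : ∀ e ∈ Finset.range n, V e ∈ F := by
    intro e he
    obtain ⟨S, hSF, heS, _⟩ := hcrit e he
    exact sup_mem_of_unionClosed hUC _ (Finset.filter_subset _ _)
      ⟨S, Finset.mem_filter.2 ⟨hSF, heS⟩⟩
  have heV : ∀ e, e ∉ V e := by
    intro e he
    obtain ⟨S, hS, heS⟩ := Finset.mem_sup.1 he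
    exact (Finset.mem_filter.1 hS).2 heS
  have hsubV : ∀ e, ∀ S ∈ F, e ∉ S → S ⊆ V e := by
    intro e S hS heS
    exact Finset.le_sup (f := id) (Finset.mem_filter.2 ⟨hS, heS⟩)
  have hmem_iff : ∀ e, ∀ S ∈ F, (e ∈ S ↔ ¬ S ⊆ V e) := by
    intro e S hS
    constructor
    · intro heS hsub; exact heV e (hsub heS)
    · intro h; by_contra he; exact h (hsubV e S hS he)
  have hinj : ∀ e ∈ Finset.range n, ∀ e' ∈ Finset.range n, V e = V e' → e = e' := by
    intro e he e' he' hVV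
    by_contra hne
    obtain ⟨S', hS'F, he'S', hT'F⟩ := hcrit e' he'
    by_cases heS' : e ∈ S'
    · have h1 : S' ⊆ V e' := hsubV e' S' hS'F he'S'
      exact heV e (hVV ▸ (h1 heS'))
    · have hT : insert e' S' ⊆ V e := hsubV e (insert e' S') hT'F (by
        simp only [Finset.mem_insert]
        push_neg
        exact ⟨hne, heS'⟩)
      have h2 : e' ∈ V e' := hVV ▸ hT (Finset.mem_insert_self e' S')
      exact heV e' h2
  have hn1 : 0 < n := lt_of_le_of_lt (Nat.zero_le a) han
  have h0 : (0 : ℕ) ∈ Finset.range n := Finset.mem_range.2 hn1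
  have hFne : F.Nonempty := by
    obtain ⟨S, hSF, _, _⟩ := hcrit 0 h0
    exact ⟨S, hSF⟩
  set M : Finset ℕ := F.sup id with hMdef
  have hMF : M ∈ F := sup_mem_of_unionClosed hUC F (Finset.Subset.refl F) hFne
  have heM : ∀ e ∈ Finset.range n, e ∈ M := by
    intro e he
    obtain ⟨S, hSF, _, hTF⟩ := hcrit e he
    exact Finset.mem_sup.2 ⟨insert e S, hTF, Finset.mem_insert_self e S⟩
  have hMneV : ∀ e ∈ Finset.range n, M ≠ V e := by
    intro e he h
    exact heV e (h ▸ heM e he)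
  have hIne : ((Finset.range n).image V).Nonempty :=
    ⟨V 0, Finset.mem_image.2 ⟨0, h0, rfl⟩⟩
  obtain ⟨v, hvI, hvmin⟩ : ∃ v ∈ (Finset.range n).image V,
      ∀ x ∈ (Finset.range n).image V, ¬ x < v := by
    obtain ⟨v, hv⟩ := Finset.exists_minimal hIne
    exact ⟨v, hv.1, fun x hx hlt => hlt.not_ge (hv.2 hx hlt.le)⟩
  obtain ⟨e₀, he₀, rfl⟩ := Finset.mem_image.1 hvI
  have hsubset : insert M (((Finset.range n).erase e₀).image V)
      ⊆ F.filter (fun S => e₀ ∈ S) := by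
    intro S hS
    rcases Finset.mem_insert.1 hS with rfl | hS'
    · exact Finset.mem_filter.2 ⟨hMF, heM e₀ he₀⟩
    · obtain ⟨e, he, rfl⟩ := Finset.mem_image.1 hS'
      have heR : e ∈ Finset.range n := Finset.mem_of_mem_erase he
      have hene : e ≠ e₀ := Finset.ne_of_mem_erase he
      refine Finset.mem_filter.2 ⟨hVF e heR, ?_⟩
      rw [hmem_iff e₀ (V e) (hVF e heR)]
      intro hsub
      have hne' : V e ≠ V e₀ := fun h => hene (hinj e heR e₀ he₀ h)
      exact hvmin (V e) (Finset.mem_image.2 ⟨e, heR, rfl⟩) (lt_of_le_of_ne hsub hne')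
  have hMnotmem : M ∉ ((Finset.range n).erase e₀).image V := by
    intro h
    obtain ⟨e, he, heq⟩ := Finset.mem_image.1 h
    exact hMneV e (Finset.mem_of_mem_erase he) heq.symm
  have hinjOn : Set.InjOn V ↑((Finset.range n).erase e₀) := by
    intro x hx y hy hxy
    exact hinj x (Finset.mem_of_mem_erase (Finset.mem_coe.1 hx))
      y (Finset.mem_of_mem_erase (Finset.mem_coe.1 hy)) hxy
  have hcard1 : (insert M (((Finset.range n).erase e₀).image V)).card = n := by
    rw [Finset.card_insert_of_notMem hMnotmem, Finset.card_image_of_injOn hinjOn,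
      Finset.card_erase_of_mem he₀, Finset.card_range]
    omega
  have hcard : n ≤ degOf F e₀ := by
    have := Finset.card_le_card hsubset
    rw [hcard1] at this
    exact this
  have := hdeg e₀ he₀
  omega

/-- If some element `e` of `[n]` has injective trace on `F`, then erasing `e` and
relabeling gives an equal-sized family on `[n-1]` with the same degree bound. -/
lemma case1_aux {n a : ℕ} {F : Finset (Finset ℕ)}
    (hUC : UnionClosed F) (hFam : FamilyOn n F) (hne : F.Nonempty)
    (hdeg : ∀ e ∈ Finset.range n, degOf F e ≤ a)
    {e : ℕ} (he : e ∈ Finset.range n)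
    (hinj : ∀ S ∈ F, ∀ T ∈ F, S.erase e = T.erase e → S = T) :
    ∃ F' : Finset (Finset ℕ), UnionClosed F' ∧ FamilyOn (n-1) F' ∧ F'.Nonempty ∧
      (∀ x ∈ Finset.range (n-1), degOf F' x ≤ a) ∧ F'.card = F.card := by
  classical
  have hen : e < n := Finset.mem_range.1 he
  set σ : ℕ ≃ ℕ := Equiv.swap e (n-1) with hσdef
  set t : Finset ℕ → Finset ℕ := fun S => (S.erase e).image σ with htdef
  refine ⟨F.image t, ?_, ?_, hne.image t, ?_, ?_⟩
  · -- union closed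
    intro S' hS' T' hT'
    obtain ⟨S, hSF, rfl⟩ := Finset.mem_image.1 hS'
    obtain ⟨T, hTF, rfl⟩ := Finset.mem_image.1 hT'
    have hkey : t S ∪ t T = t (S ∪ T) := by
      simp only [htdef, ← Finset.image_union, Finset.erase_union_distrib]
    rw [hkey]
    exact Finset.mem_image.2 ⟨S ∪ T, hUC S hSF T hTF, rfl⟩
  · -- family on n-1
    intro S' hS' x hx
    obtain ⟨S, hSF, rfl⟩ := Finset.mem_image.1 hS'
    obtain ⟨y, hy, rfl⟩ := Finset.mem_image.1 hx
    have hyS : y ∈ S := Finset.mem_of_mem_erase hy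
    have hye : y ≠ e := Finset.ne_of_mem_erase hy
    have hyn : y < n := Finset.mem_range.1 (hFam S hSF hyS)
    rcases eq_or_ne y (n-1) with rfl | hy1
    · rw [hσdef]
      simp only [Equiv.swap_apply_right]
      exact Finset.mem_range.2 (by omega)
    · rw [hσdef]
      rw [Equiv.swap_apply_of_ne_of_ne hye hy1]
      exact Finset.mem_range.2 (by omega)
  · -- degrees
    intro x hx
    have hx' : x < n - 1 := Finset.mem_range.1 hx
    have hσx : σ x ∈ Finset.range n := by
      rcases eq_or_ne x e with rfl | hxe
      · rw [hσdef]
        simp only [Equiv.swap_apply_left]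
        exact Finset.mem_range.2 (by omega)
      · rw [hσdef, Equiv.swap_apply_of_ne_of_ne hxe (by omega : x ≠ n-1)]
        exact Finset.mem_range.2 (by omega)
    have hsub : (F.image t).filter (fun S => x ∈ S)
        ⊆ (F.filter (fun S => σ x ∈ S)).image t := by
      intro S' hS'
      obtain ⟨hS'img, hxS'⟩ := Finset.mem_filter.1 hS'
      obtain ⟨S, hSF, rfl⟩ := Finset.mem_image.1 hS'img
      have hσxS : σ x ∈ S := by
        obtain ⟨y, hy, hyx⟩ := Finset.mem_image.1 hxS'
        have hy2 : σ x = y := by rw [← hyx, Equiv.swap_apply_self]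
        rw [hy2]
        exact Finset.mem_of_mem_erase hy
      exact Finset.mem_image.2 ⟨S, Finset.mem_filter.2 ⟨hSF, hσxS⟩, rfl⟩
    calc degOf (F.image t) x = ((F.image t).filter (fun S => x ∈ S)).card := rfl
      _ ≤ ((F.filter (fun S => σ x ∈ S)).image t).card := Finset.card_le_card hsub
      _ ≤ (F.filter (fun S => σ x ∈ S)).card := Finset.card_image_le
      _ = degOf F (σ x) := rfl
      _ ≤ a := hdeg _ hσx
  · -- cardinality
    apply Finset.card_image_of_injOn
    intro S hS T hT hst
    apply hinj S (Finset.mem_coe.1 hS) T (Finset.mem_coe.1 hT)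
    exact Finset.image_injective σ.injective hst

/-- For all positive integers `a, n` with `n > a`, one has `f(n-1,a) = f(n,a)`. -/
theorem franklF_stable_of_gt (a n : ℕ) (ha : 0 < a) (hn : a < n) :
    franklF (n - 1) a = franklF n a := by
  classical
  have hseteq : {m | ∃ F : Finset (Finset ℕ), UnionClosed F ∧ FamilyOn (n-1) F ∧ F.Nonempty ∧
      (∀ e ∈ Finset.range (n-1), degOf F e ≤ a) ∧ F.card = m}
      = {m | ∃ F : Finset (Finset ℕ), UnionClosed F ∧ FamilyOn n F ∧ F.Nonempty ∧
      (∀ e ∈ Finset.range n, degOf F e ≤ a) ∧ F.card = m} := by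
    ext m
    constructor
    · rintro ⟨F, hUC, hFam, hne, hdeg, rfl⟩
      refine ⟨F, hUC, ?_, hne, ?_, rfl⟩
      · intro S hS
        exact (hFam S hS).trans (Finset.range_subset_range.2 (by omega))
      · intro e he
        have he' : e < n := Finset.mem_range.1 he
        rcases lt_or_ge e (n-1) with h | h
        · exact hdeg e (Finset.mem_range.2 h)
        · have hempty : F.filter (fun S => e ∈ S) = ∅ := by
            apply Finset.filter_eq_empty_iff.2
            intro S hS heS
            have := Finset.mem_range.1 (hFam S hS heS)
            omega
          simp [degOf, hempty]
    · rintro ⟨F, hUC, hFam, hne, hdeg, rfl⟩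
      by_cases hcase : ∃ e ∈ Finset.range n, ∀ S ∈ F, ∀ T ∈ F, S.erase e = T.erase e → S = T
      · obtain ⟨e, he, hinj⟩ := hcase
        exact case1_aux hUC hFam hne hdeg he hinj
      · exfalso
        push_neg at hcase
        apply all_critical_false hn hUC hdeg
        intro e he
        obtain ⟨S, hS, T, hT, hET, hneq⟩ := hcase e he
        by_cases heS : e ∈ S
        · by_cases heT : e ∈ T
          · exfalso
            apply hneq
            have := congrArg (insert e) hET
            rwa [Finset.insert_erase heS, Finset.insert_erase heT] at this
          · refine ⟨T, hT, heT, ?_⟩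
            have hTe : T.erase e = T := Finset.erase_eq_of_notMem heT
            have hST : insert e T = S := by
              rw [← hTe, ← hET, Finset.insert_erase heS]
            rw [hST]
            exact hS
        · by_cases heT : e ∈ T
          · refine ⟨S, hS, heS, ?_⟩
            have hSe : S.erase e = S := Finset.erase_eq_of_notMem heS
            have hTS : insert e S = T := by
              rw [← hSe, hET, Finset.insert_erase heT]
            rw [hTS]
            exact hT
          · exfalso
            apply hneq
            rw [← Finset.erase_eq_of_notMem heS, hET, Finset.erase_eq_of_notMem heT]
  unfold franklF
  rw [hseteq]
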